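/- arXiv:2408.04634 — 4 statements merged into one kernel-verified Lean document; each statement's English description precedes it below -/
import Mathlib

section
/- If F : ℝ → ℝ is Borel measurable and F ∘ f ∈ L¹(Ω), then F ∘ f* ∈ L¹(0,|Ω|) and ∫_Ω F(f(x)) dx = ∫_0^{|Ω|} F(f*(s)) ds. -/
open MeasureTheory Set Filter Topology
open scoped ENNReal

noncomputable section

/-- Distribution function `d_f(t) = |{x ∈ Ω : f x > t}|`. -/
def distrib {N : ℕ} (Ω : Set (Fin N → ℝ)) (f : (Fin N → ℝ) → ℝ) (t : ℝ) : ℝ≥0∞ :=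
  volume {x ∈ Ω | t < f x}

/-- Equimeasurability of two functions on `Ω`. -/
def EquiMeas {N : ℕ} (Ω : Set (Fin N → ℝ)) (f g : (Fin N → ℝ) → ℝ) : Prop :=
  ∀ t : ℝ, distrib Ω f t = distrib Ω g t

/-- Decreasing rearrangement `f*(s) = sup {t : d_f(t) > s}`. -/
def decRearr {N : ℕ} (Ω : Set (Fin N → ℝ)) (f : (Fin N → ℝ) → ℝ) (s : ℝ) : ℝ :=
  sSup {t : ℝ | ENNReal.ofReal s < distrib Ω f t}

/-- Hardy–Littlewood–Pólya order `g ≺ f`. -/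
def Prec {N : ℕ} (Ω : Set (Fin N → ℝ)) (g f : (Fin N → ℝ) → ℝ) : Prop :=
  (∀ t ∈ Icc (0 : ℝ) (volume Ω).toReal,
      ∫ s in Ioo (0 : ℝ) t, decRearr Ω g s ≤ ∫ s in Ioo (0 : ℝ) t, decRearr Ω f s) ∧
  ∫ s in Ioo (0 : ℝ) (volume Ω).toReal, decRearr Ω g s
    = ∫ s in Ioo (0 : ℝ) (volume Ω).toReal, decRearr Ω f s

lemma distrib_anti {N : ℕ} (Ω : Set (Fin N → ℝ)) (f : (Fin N → ℝ) → ℝ) :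
    Antitone (distrib Ω f) := fun a b hab =>
  measure_mono (fun x hx => ⟨hx.1, lt_of_le_of_lt hab hx.2⟩)

lemma distrib_le_volume {N : ℕ} (Ω : Set (Fin N → ℝ)) (f : (Fin N → ℝ) → ℝ) (t : ℝ) :
    distrib Ω f t ≤ volume Ω := measure_mono (sep_subset _ _)

lemma exists_lt_distrib {N : ℕ} {Ω : Set (Fin N → ℝ)} {f : (Fin N → ℝ) → ℝ}
    {s : ℝ≥0∞} {t : ℝ} (h : s < distrib Ω f t) : ∃ t', t < t' ∧ s < distrib Ω f t' := by
  have hset : {x ∈ Ω | t < f x} = ⋃ n : ℕ, {x ∈ Ω | t + 1/(n+1) < f x} := by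
    ext x
    simp only [mem_iUnion, mem_sep_iff]
    constructor
    · rintro ⟨hx, hlt⟩
      obtain ⟨n, hn⟩ := exists_nat_one_div_lt (sub_pos.2 hlt)
      exact ⟨n, hx, by linarith⟩
    · rintro ⟨n, hx, hlt⟩
      have : (0:ℝ) < 1/(n+1) := by positivity
      exact ⟨hx, by linarith⟩
  have hmono : Monotone (fun n : ℕ => {x ∈ Ω | t + 1/(n+1) < f x}) := by
    intro m n hmn x hx
    refine ⟨hx.1, lt_of_le_of_lt ?_ hx.2⟩
    have : (1:ℝ)/(n+1) ≤ 1/(m+1) := by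
      apply one_div_le_one_div_of_le (by positivity)
      have : (m:ℝ) ≤ n := Nat.cast_le.2 hmn
      linarith
    linarith
  rw [distrib, hset, hmono.directed_le.measure_iUnion] at h
  obtain ⟨n, hn⟩ := lt_iSup_iff.mp h
  refine ⟨t + 1/(n+1), ?_, hn⟩
  have : (0:ℝ) < 1/(n+1 : ℝ) := by positivity
  linarith

theorem integral_comp_eq_integral_comp_decRearr
    (N : ℕ) (Ω : Set (Fin N → ℝ)) (hΩo : IsOpen Ω) (hΩb : Bornology.IsBounded Ω)
    (f : (Fin N → ℝ) → ℝ) (hf : Measurable f)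
    (hbd : ∃ C : ℝ, ∀ᵐ x ∂(volume.restrict Ω), |f x| ≤ C)
    (F : ℝ → ℝ) (hF : Measurable F)
    (hint : IntegrableOn (F ∘ f) Ω) :
    IntegrableOn (F ∘ decRearr Ω f) (Ioo 0 (volume Ω).toReal) ∧
    ∫ x in Ω, F (f x) = ∫ s in Ioo (0 : ℝ) (volume Ω).toReal, F (decRearr Ω f s) := by
  classical
  obtain ⟨C, hC⟩ := hbd
  set T : ℝ := (volume Ω).toReal with hT
  have hΩm : MeasurableSet Ω := hΩo.measurableSet
  have hfin : volume Ω ≠ ⊤ := hΩb.measure_lt_top.ne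
  have hdfin : ∀ t, distrib Ω f t ≠ ⊤ := fun t =>
    (lt_of_le_of_lt (distrib_le_volume Ω f t) hfin.lt_top).ne
  rw [ae_restrict_iff' hΩm, ae_iff] at hC
  have hzero : ∀ t, C ≤ t → distrib Ω f t = 0 := by
    intro t ht
    refine measure_mono_null (fun x hx => ?_) hC
    intro h
    have h1 := h hx.1
    have h2 : C < f x := lt_of_le_of_lt ht hx.2
    have := le_abs_self (f x)
    linarith
  have hfull : ∀ t, t < -C → distrib Ω f t = volume Ω := by
    intro t ht
    refine le_antisymm (distrib_le_volume _ _ _) ?_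
    calc volume Ω ≤ volume ({x ∈ Ω | t < f x} ∪ {x | ¬(x ∈ Ω → |f x| ≤ C)}) := by
          refine measure_mono (fun x hx => ?_)
          by_cases h : |f x| ≤ C
          · left
            have := neg_abs_le (f x)
            exact ⟨hx, by linarith⟩
          · right
            exact fun h' => h (h' hx)
      _ ≤ volume {x ∈ Ω | t < f x} + volume {x | ¬(x ∈ Ω → |f x| ≤ C)} := measure_union_le _ _
      _ = distrib Ω f t := by rw [hC, add_zero]; rfl
  have hbdd : ∀ s : ℝ, BddAbove {t | ENNReal.ofReal s < distrib Ω f t} := by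
    intro s
    refine ⟨C, fun t ht => ?_⟩
    by_contra hlt
    push_neg at hlt
    have ht' : ENNReal.ofReal s < distrib Ω f t := ht
    rw [hzero t hlt.le] at ht'
    simpa using ht'
  have hmem : ∀ s : ℝ, ENNReal.ofReal s < volume Ω →
      (-C-1) ∈ {t | ENNReal.ofReal s < distrib Ω f t} := by
    intro s hs
    show ENNReal.ofReal s < distrib Ω f (-C-1)
    rw [hfull _ (by linarith)]
    exact hs
  have hsol : ∀ s ∈ Ioo (0:ℝ) T, ENNReal.ofReal s < volume Ω := by
    intro s hs
    have : ENNReal.ofReal s < ENNReal.ofReal T := by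
      exact (ENNReal.ofReal_lt_ofReal_iff_of_nonneg hs.1.le).2 hs.2
    rwa [ENNReal.ofReal_toReal hfin] at this
  have key : ∀ s ∈ Ioo (0:ℝ) T, ∀ a : ℝ,
      (a < decRearr Ω f s ↔ ENNReal.ofReal s < distrib Ω f a) := by
    intro s hs a
    rw [decRearr, lt_csSup_iff (hbdd s) ⟨_, hmem s (hsol s hs)⟩]
    constructor
    · rintro ⟨t, ht, hat⟩
      exact lt_of_lt_of_le ht (distrib_anti Ω f hat.le)
    · intro h
      obtain ⟨t', ht', hd⟩ := exists_lt_distrib h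
      exact ⟨t', hd, ht'⟩
  have hanti : AntitoneOn (decRearr Ω f) (Ioo 0 T) := by
    intro s hs s' hs' hss
    refine csSup_le_csSup (hbdd s) ⟨_, hmem s' (hsol s' hs')⟩ (fun t ht => ?_)
    exact lt_of_le_of_lt (ENNReal.ofReal_le_ofReal hss) ht
  have haem : AEMeasurable (decRearr Ω f) (volume.restrict (Ioo 0 T)) :=
    aemeasurable_restrict_of_antitoneOn measurableSet_Ioo hanti
  have hpre : ∀ a : ℝ, decRearr Ω f ⁻¹' Ioi a ∩ Ioo 0 T
      = Ioo 0 (min (distrib Ω f a).toReal T) := by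
    intro a
    ext s
    simp only [mem_inter_iff, mem_preimage, mem_Ioi, mem_Ioo, lt_min_iff]
    constructor
    · rintro ⟨ha, h0, hTs⟩
      have h2 := (key s ⟨h0, hTs⟩ a).1 ha
      exact ⟨h0, (ENNReal.ofReal_lt_iff_lt_toReal h0.le (hdfin a)).1 h2, hTs⟩
    · rintro ⟨h0, hd, hTs⟩
      exact ⟨(key s ⟨h0, hTs⟩ a).2 ((ENNReal.ofReal_lt_iff_lt_toReal h0.le (hdfin a)).2 hd),
        h0, hTs⟩
  have hIoi1 : ∀ a : ℝ, Measure.map f (volume.restrict Ω) (Ioi a) = distrib Ω f a := by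
    intro a
    rw [Measure.map_apply hf measurableSet_Ioi, Measure.restrict_apply (hf measurableSet_Ioi)]
    rw [distrib]
    congr 1
    ext x
    simp only [mem_inter_iff, mem_preimage, mem_Ioi, mem_sep_iff]
    exact and_comm
  have hIoi2 : ∀ a : ℝ, Measure.map (decRearr Ω f) (volume.restrict (Ioo 0 T)) (Ioi a)
      = distrib Ω f a := by
    intro a
    rw [Measure.map_apply_of_aemeasurable haem measurableSet_Ioi,
      Measure.restrict_apply' measurableSet_Ioo, hpre a]
    have hle : (distrib Ω f a).toReal ≤ T := ENNReal.toReal_mono hfin (distrib_le_volume _ _ _)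
    rw [min_eq_left hle, Real.volume_Ioo, sub_zero, ENNReal.ofReal_toReal (hdfin a)]
  haveI hμ1 : IsFiniteMeasure (Measure.map f (volume.restrict Ω)) := by
    constructor
    rw [Measure.map_apply hf MeasurableSet.univ, preimage_univ, Measure.restrict_apply_univ]
    exact hfin.lt_top
  have hmap : Measure.map f (volume.restrict Ω)
      = Measure.map (decRearr Ω f) (volume.restrict (Ioo 0 T)) := by
    refine ext_of_generate_finite (range Ioi) ?_ isPiSystem_Ioi ?_ ?_
    · exact (BorelSpace.measurable_eq).trans (borel_eq_generateFrom_Ioi ℝ)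
    · rintro _ ⟨a, rfl⟩
      rw [hIoi1, hIoi2]
    · rw [Measure.map_apply hf MeasurableSet.univ,
        Measure.map_apply_of_aemeasurable haem MeasurableSet.univ, preimage_univ, preimage_univ,
        Measure.restrict_apply_univ, Measure.restrict_apply_univ, Real.volume_Ioo, sub_zero,
        ENNReal.ofReal_toReal hfin]
  have hFsm1 : AEStronglyMeasurable F (Measure.map f (volume.restrict Ω)) :=
    hF.aestronglyMeasurable
  have hFsm2 : AEStronglyMeasurable F (Measure.map (decRearr Ω f) (volume.restrict (Ioo 0 T))) :=
    hF.aestronglyMeasurable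
  have hInt2 : Integrable F (Measure.map (decRearr Ω f) (volume.restrict (Ioo 0 T))) := by
    rw [← hmap]
    exact (integrable_map_measure hFsm1 hf.aemeasurable).2 hint
  constructor
  · exact (integrable_map_measure hFsm2 haem).1 hInt2
  · calc ∫ x in Ω, F (f x) = ∫ y, F y ∂(Measure.map f (volume.restrict Ω)) :=
        (integral_map hf.aemeasurable hFsm1).symm
      _ = ∫ y, F y ∂(Measure.map (decRearr Ω f) (volume.restrict (Ioo 0 T))) := by rw [hmap]
      _ = ∫ s in Ioo (0:ℝ) T, F (decRearr Ω f s) := integral_map haem hFsm2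
end
end

section
/- Let m₀ ∈ L^∞(Ω) with m₀ ≥ 0 a.e. and ∫_Ω m₀ dx > 0. Then for every m in the weak* closure of the class of rearrangements of m₀ (equivalently, every m ∈ L^∞(Ω) with m ≺ m₀), one has |{x ∈ Ω : m₀(x) > 0}| ≤ |{x ∈ Ω : m(x) > 0}|. -/
open MeasureTheory Set Filter Topology
open scoped ENNReal

noncomputable section

namespace HLPAux

variable {N : ℕ} {Ω : Set (Fin N → ℝ)} {f : (Fin N → ℝ) → ℝ} {C t s : ℝ}

lemma distrib_eq (hΩ : MeasurableSet Ω) (hf : Measurable f) (t : ℝ) :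
    distrib Ω f t = (volume.restrict Ω) {x | t < f x} := by
  rw [Measure.restrict_apply (measurableSet_lt measurable_const hf)]
  unfold distrib
  congr 1
  ext x
  simp [Set.mem_sep_iff, and_comm]

lemma distrib_anti {t₁ t₂ : ℝ} (h : t₁ ≤ t₂) : distrib Ω f t₂ ≤ distrib Ω f t₁ :=
  measure_mono fun x hx => ⟨hx.1, lt_of_le_of_lt h hx.2⟩

lemma distrib_zero (hΩ : MeasurableSet Ω) (hf : Measurable f)
    (hC : ∀ᵐ x ∂(volume.restrict Ω), |f x| ≤ C) (ht : C ≤ t) :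
    distrib Ω f t = 0 := by
  rw [distrib_eq hΩ hf]
  refine measure_mono_null (fun x hx => ?_) (ae_iff.mp hC)
  simp only [Set.mem_setOf_eq] at hx ⊢
  intro habs
  have h2 : f x ≤ |f x| := le_abs_self _
  linarith

lemma distrib_full (hΩ : MeasurableSet Ω) (hf : Measurable f)
    (h0 : (volume.restrict Ω) {x | f x ≤ t} = 0) :
    distrib Ω f t = volume Ω := by
  rw [distrib_eq hΩ hf]
  apply le_antisymm
  · calc (volume.restrict Ω) {x | t < f x} ≤ (volume.restrict Ω) Set.univ :=
        measure_mono (Set.subset_univ _)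
    _ = volume Ω := by rw [Measure.restrict_apply_univ]
  · calc volume Ω = (volume.restrict Ω) Set.univ := (Measure.restrict_apply_univ _).symm
    _ ≤ (volume.restrict Ω) ({x | t < f x} ∪ {x | f x ≤ t}) := by
        refine measure_mono fun x _ => ?_
        rcases lt_or_ge t (f x) with h | h
        · exact Or.inl h
        · exact Or.inr h
    _ ≤ (volume.restrict Ω) {x | t < f x} + (volume.restrict Ω) {x | f x ≤ t} :=
        measure_union_le _ _
    _ = (volume.restrict Ω) {x | t < f x} := by rw [h0, add_zero]

lemma set_subset_Iio (hΩ : MeasurableSet Ω) (hf : Measurable f)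
    (hC : ∀ᵐ x ∂(volume.restrict Ω), |f x| ≤ C) :
    {t : ℝ | ENNReal.ofReal s < distrib Ω f t} ⊆ Set.Iio C := by
  intro t ht
  simp only [Set.mem_setOf_eq] at ht
  by_contra h
  rw [Set.mem_Iio, not_lt] at h
  rw [distrib_zero hΩ hf hC h] at ht
  simp at ht

lemma bddAbove_set (hΩ : MeasurableSet Ω) (hf : Measurable f)
    (hC : ∀ᵐ x ∂(volume.restrict Ω), |f x| ≤ C) :
    BddAbove {t : ℝ | ENNReal.ofReal s < distrib Ω f t} :=
  (bddAbove_Iio (a := C)).mono (set_subset_Iio hΩ hf hC)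

lemma distrib_neg_full (hΩ : MeasurableSet Ω) (hf : Measurable f)
    (hC : ∀ᵐ x ∂(volume.restrict Ω), |f x| ≤ C) (ht : t < -C) :
    distrib Ω f t = volume Ω := by
  refine distrib_full hΩ hf ?_
  refine measure_mono_null (fun x hx => ?_) (ae_iff.mp hC)
  simp only [Set.mem_setOf_eq] at hx ⊢
  intro habs
  have h1 : -C ≤ f x := neg_le_of_abs_le habs
  linarith

lemma mem_set_of_lt (hΩ : MeasurableSet Ω) (hf : Measurable f)
    (hC : ∀ᵐ x ∂(volume.restrict Ω), |f x| ≤ C)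
    (hs : ENNReal.ofReal s < volume Ω) (hC0 : 0 ≤ C) :
    -(C+1) ∈ {t : ℝ | ENNReal.ofReal s < distrib Ω f t} := by
  simp only [Set.mem_setOf_eq]
  rw [distrib_neg_full hΩ hf hC (by linarith)]
  exact hs

/-- The truncated decreasing rearrangement: equals `decRearr` while `ofReal s < volume Ω`,
and `-(C+1)` afterwards. It is globally antitone. -/
def trunc (Ω : Set (Fin N → ℝ)) (f : (Fin N → ℝ) → ℝ) (C : ℝ) (s : ℝ) : ℝ :=
  if ENNReal.ofReal s < volume Ω then decRearr Ω f s else -(C+1)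

lemma trunc_eq (hs : ENNReal.ofReal s < volume Ω) : trunc Ω f C s = decRearr Ω f s :=
  if_pos hs

lemma trunc_le (hΩ : MeasurableSet Ω) (hf : Measurable f)
    (hC : ∀ᵐ x ∂(volume.restrict Ω), |f x| ≤ C) (hC0 : 0 ≤ C) :
    trunc Ω f C s ≤ C := by
  unfold trunc
  split
  · exact Real.sSup_le (fun t ht => le_of_lt (set_subset_Iio hΩ hf hC ht)) hC0
  · linarith

lemma trunc_ge (hΩ : MeasurableSet Ω) (hf : Measurable f)
    (hC : ∀ᵐ x ∂(volume.restrict Ω), |f x| ≤ C) (hC0 : 0 ≤ C) :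
    -(C+1) ≤ trunc Ω f C s := by
  unfold trunc
  split
  · exact le_csSup (bddAbove_set hΩ hf hC)
      (mem_set_of_lt hΩ hf hC (by assumption) hC0)
  · exact le_refl _

lemma trunc_antitone (hΩ : MeasurableSet Ω) (hf : Measurable f)
    (hC : ∀ᵐ x ∂(volume.restrict Ω), |f x| ≤ C) (hC0 : 0 ≤ C) :
    Antitone (trunc Ω f C) := by
  intro s₁ s₂ h
  unfold trunc
  by_cases h2 : ENNReal.ofReal s₂ < volume Ω
  · have h1 : ENNReal.ofReal s₁ < volume Ω :=
      lt_of_le_of_lt (ENNReal.ofReal_le_ofReal h) h2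
    rw [if_pos h2, if_pos h1]
    exact csSup_le_csSup (bddAbove_set hΩ hf hC)
      ⟨-(C+1), mem_set_of_lt hΩ hf hC h2 hC0⟩
      (fun t ht => lt_of_le_of_lt (ENNReal.ofReal_le_ofReal h) ht)
  · rw [if_neg h2]
    split
    · exact le_csSup (bddAbove_set hΩ hf hC)
        (mem_set_of_lt hΩ hf hC (by assumption) hC0)
    · exact le_refl _

lemma trunc_integrableOn (hΩ : MeasurableSet Ω) (hf : Measurable f)
    (hC : ∀ᵐ x ∂(volume.restrict Ω), |f x| ≤ C) (hC0 : 0 ≤ C) (a b : ℝ) :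
    IntegrableOn (trunc Ω f C) (Set.Ioc a b) volume := by
  refine Integrable.mono' (g := fun _ => C + 1)
    ((integrableOn_const_iff).2 (Or.inr ?_))
    ((trunc_antitone hΩ hf hC hC0).measurable).aestronglyMeasurable
    (Filter.Eventually.of_forall fun s => ?_)
  · rw [Real.volume_Ioc]; exact ENNReal.ofReal_lt_top
  · show |trunc Ω f C s| ≤ C + 1
    rw [abs_le]
    exact ⟨trunc_ge hΩ hf hC hC0, (trunc_le hΩ hf hC hC0).trans (by linarith)⟩

end HLPAux

theorem measure_pos_set_le_of_prec_nonneg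
    (N : ℕ) (Ω : Set (Fin N → ℝ)) (hΩo : IsOpen Ω) (hΩb : Bornology.IsBounded Ω)
    (m₀ : (Fin N → ℝ) → ℝ) (hm₀ : Measurable m₀)
    (hm₀b : ∃ C : ℝ, ∀ᵐ x ∂(volume.restrict Ω), |m₀ x| ≤ C)
    (hm₀nonneg : ∀ᵐ x ∂(volume.restrict Ω), 0 ≤ m₀ x)
    (hm₀int : 0 < ∫ x in Ω, m₀ x)
    (m : (Fin N → ℝ) → ℝ) (hm : Measurable m)
    (hmb : ∃ C : ℝ, ∀ᵐ x ∂(volume.restrict Ω), |m x| ≤ C)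
    (hprec : Prec Ω m m₀) :
    volume {x ∈ Ω | 0 < m₀ x} ≤ volume {x ∈ Ω | 0 < m x} := by
  classical
  obtain ⟨C₀, hC₀⟩ := hm₀b
  obtain ⟨C₁, hC₁⟩ := hmb
  set C := max (max C₀ C₁) 0 with hCdef
  have hC0 : (0:ℝ) ≤ C := le_max_right _ _
  have hCm₀ : ∀ᵐ x ∂(volume.restrict Ω), |m₀ x| ≤ C :=
    hC₀.mono fun x h => h.trans ((le_max_left _ _).trans (le_max_left _ _))
  have hCm : ∀ᵐ x ∂(volume.restrict Ω), |m x| ≤ C :=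
    hC₁.mono fun x h => h.trans ((le_max_right _ _).trans (le_max_left _ _))
  have hΩm : MeasurableSet Ω := hΩo.measurableSet
  have hfin : volume Ω ≠ ⊤ := hΩb.measure_lt_top.ne
  have hΩ0 : volume Ω ≠ 0 := by
    intro h
    rw [Measure.restrict_eq_zero.mpr h] at hm₀int
    simp at hm₀int
  set T := (volume Ω).toReal with hTdef
  have hT0 : 0 < T := ENNReal.toReal_pos hΩ0 hfin
  have hofT : ENNReal.ofReal T = volume Ω := ENNReal.ofReal_toReal hfin
  by_contra hlt
  push_neg at hlt
  set α := volume {x ∈ Ω | 0 < m₀ x} with hα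
  set β := volume {x ∈ Ω | 0 < m x} with hβ
  have hαle : α ≤ volume Ω := measure_mono (Set.sep_subset _ _)
  have hβle : β ≤ volume Ω := measure_mono (Set.sep_subset _ _)
  have hαfin : α ≠ ⊤ := (lt_of_le_of_lt hαle hΩb.measure_lt_top).ne
  have hβfin : β ≠ ⊤ := (lt_of_le_of_lt hβle hΩb.measure_lt_top).ne
  set αR := α.toReal with hαR
  set βR := β.toReal with hβR
  have hβαR : βR < αR := (ENNReal.toReal_lt_toReal hβfin hαfin).mpr hlt
  have hβR0 : (0:ℝ) ≤ βR := ENNReal.toReal_nonneg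
  have hαRT : αR ≤ T := ENNReal.toReal_mono hfin hαle
  have hβRT : βR ≤ T := ENNReal.toReal_mono hfin hβle
  have hdm0 : distrib Ω m 0 = β := rfl
  have hdm₀0 : distrib Ω m₀ 0 = α := rfl
  -- F1 : decRearr of m is nonpositive past βR
  have F1 : ∀ s ∈ Set.Ioo βR T, decRearr Ω m s ≤ 0 := by
    rintro s ⟨hs1, hs2⟩
    refine Real.sSup_le (fun t ht => ?_) le_rfl
    simp only [Set.mem_setOf_eq] at ht
    by_contra htpos
    push_neg at htpos
    have h1 : distrib Ω m t ≤ β := hdm0 ▸ HLPAux.distrib_anti htpos.le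
    have h2 : β ≤ ENNReal.ofReal s := by
      rw [← ENNReal.ofReal_toReal hβfin]
      exact ENNReal.ofReal_le_ofReal hs1.le
    exact absurd ht (not_lt.mpr (h1.trans h2))
  -- distrib of m₀ at negative levels is full
  have hm₀neg : ∀ t : ℝ, t < 0 → distrib Ω m₀ t = volume Ω := by
    intro t ht
    refine HLPAux.distrib_full hΩm hm₀ ?_
    refine measure_mono_null (fun x hx => ?_) (ae_iff.mp hm₀nonneg)
    simp only [Set.mem_setOf_eq] at hx ⊢
    intro h; linarith
  have hofRealvol : ∀ s : ℝ, s < T → ENNReal.ofReal s < volume Ω := by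
    intro s hs
    rw [← hofT]
    exact (ENNReal.ofReal_lt_ofReal_iff hT0).mpr hs
  -- F2 : decRearr of m₀ is nonnegative on [0, T)
  have F2 : ∀ s : ℝ, s < T → 0 ≤ decRearr Ω m₀ s := by
    intro s hs
    have hsub : Set.Iio (0:ℝ) ⊆ {t | ENNReal.ofReal s < distrib Ω m₀ t} := by
      intro t ht
      simp only [Set.mem_setOf_eq]
      rw [hm₀neg t ht]
      exact hofRealvol s hs
    calc (0:ℝ) = sSup (Set.Iio (0:ℝ)) := csSup_Iio.symm
      _ ≤ _ := csSup_le_csSup (HLPAux.bddAbove_set hΩm hm₀ hCm₀)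
          ⟨-1, by norm_num⟩ hsub
  -- α as a supremum
  have hαsup : α = ⨆ n : ℕ, distrib Ω m₀ (1/((n:ℝ)+1)) := by
    have hU : {x ∈ Ω | 0 < m₀ x} = ⋃ n : ℕ, {x ∈ Ω | 1/((n:ℝ)+1) < m₀ x} := by
      ext x
      simp only [Set.mem_iUnion, Set.mem_sep_iff]
      constructor
      · rintro ⟨hx, hpos⟩
        obtain ⟨n, hn⟩ := exists_nat_one_div_lt hpos
        exact ⟨n, hx, hn⟩
      · rintro ⟨n, hx, hn⟩
        exact ⟨hx, lt_trans (by positivity) hn⟩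
    have hmono : Monotone (fun n : ℕ => {x ∈ Ω | 1/((n:ℝ)+1) < m₀ x}) := by
      intro i j hij x hx
      refine ⟨hx.1, lt_of_le_of_lt ?_ hx.2⟩
      apply one_div_le_one_div_of_le (by positivity)
      have : (i:ℝ) ≤ (j:ℝ) := Nat.cast_le.mpr hij
      linarith
    rw [hα, hU, hmono.directed_le.measure_iUnion]
    rfl
  -- F3 : decRearr of m₀ is positive on [0, αR)
  have F3 : ∀ s : ℝ, 0 ≤ s → s < αR → 0 < decRearr Ω m₀ s := by
    intro s hs0 hs
    have h1 : ENNReal.ofReal s < α := by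
      rw [← ENNReal.ofReal_toReal hαfin]
      exact (ENNReal.ofReal_lt_ofReal_iff (lt_of_le_of_lt hs0 hs)).mpr hs
    rw [hαsup, lt_iSup_iff] at h1
    obtain ⟨n, hn⟩ := h1
    have hle : 1/((n:ℝ)+1) ≤ decRearr Ω m₀ s :=
      le_csSup (HLPAux.bddAbove_set hΩm hm₀ hCm₀) hn
    have hp : 0 < 1/((n:ℝ)+1) := by positivity
    linarith
  -- truncated rearrangements
  set g := HLPAux.trunc Ω m C with hgdef
  set g₀ := HLPAux.trunc Ω m₀ C with hg₀def
  have hgeq : ∀ s : ℝ, s < T → g s = decRearr Ω m s :=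
    fun s hs => HLPAux.trunc_eq (hofRealvol s hs)
  have hg₀eq : ∀ s : ℝ, s < T → g₀ s = decRearr Ω m₀ s :=
    fun s hs => HLPAux.trunc_eq (hofRealvol s hs)
  have intg : ∀ a b : ℝ, IntegrableOn g (Set.Ioc a b) volume :=
    fun a b => HLPAux.trunc_integrableOn hΩm hm hCm hC0 a b
  have intg₀ : ∀ a b : ℝ, IntegrableOn g₀ (Set.Ioc a b) volume :=
    fun a b => HLPAux.trunc_integrableOn hΩm hm₀ hCm₀ hC0 a b
  -- conversion from the Ioo-integrals of decRearr to Ioc-integrals of trunc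
  have convm : ∀ b : ℝ, b ≤ T →
      ∫ s in Set.Ioo (0:ℝ) b, decRearr Ω m s = ∫ s in Set.Ioc (0:ℝ) b, g s := by
    intro b hb
    calc ∫ s in Set.Ioo (0:ℝ) b, decRearr Ω m s = ∫ s in Set.Ioo (0:ℝ) b, g s :=
          setIntegral_congr_fun measurableSet_Ioo
            (fun s hs => (hgeq s (lt_of_lt_of_le hs.2 hb)).symm)
      _ = ∫ s in Set.Ioc (0:ℝ) b, g s := (integral_Ioc_eq_integral_Ioo).symm
  have convm₀ : ∀ b : ℝ, b ≤ T →
      ∫ s in Set.Ioo (0:ℝ) b, decRearr Ω m₀ s = ∫ s in Set.Ioc (0:ℝ) b, g₀ s := by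
    intro b hb
    calc ∫ s in Set.Ioo (0:ℝ) b, decRearr Ω m₀ s = ∫ s in Set.Ioo (0:ℝ) b, g₀ s :=
          setIntegral_congr_fun measurableSet_Ioo
            (fun s hs => (hg₀eq s (lt_of_lt_of_le hs.2 hb)).symm)
      _ = ∫ s in Set.Ioc (0:ℝ) b, g₀ s := (integral_Ioc_eq_integral_Ioo).symm
  -- splitting of integrals
  have split : ∀ (h : ℝ → ℝ), (∀ a b : ℝ, IntegrableOn h (Set.Ioc a b) volume) →
      ∀ a b c : ℝ, a ≤ b → b ≤ c →
      ∫ s in Set.Ioc a c, h s = (∫ s in Set.Ioc a b, h s) + ∫ s in Set.Ioc b c, h s := by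
    intro h hint a b c hab hbc
    rw [← Set.Ioc_union_Ioc_eq_Ioc hab hbc,
      setIntegral_union (Set.Ioc_disjoint_Ioc.mpr (le_trans inf_le_left le_sup_right))
        measurableSet_Ioc (hint a b) (hint b c)]
  -- the hypotheses from Prec, converted
  have hP1 : ∫ s in Set.Ioc (0:ℝ) βR, g s ≤ ∫ s in Set.Ioc (0:ℝ) βR, g₀ s := by
    rw [← convm βR hβRT, ← convm₀ βR hβRT]
    exact hprec.1 βR ⟨hβR0, hβRT⟩
  have hP2 : ∫ s in Set.Ioc (0:ℝ) T, g s = ∫ s in Set.Ioc (0:ℝ) T, g₀ s := by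
    rw [← convm T le_rfl, ← convm₀ T le_rfl]
    exact hprec.2
  -- the tail integral of g is nonpositive
  have E3 : ∫ s in Set.Ioc βR T, g s ≤ 0 := by
    rw [integral_Ioc_eq_integral_Ioo]
    refine setIntegral_nonpos measurableSet_Ioo fun s hs => ?_
    rw [hgeq s hs.2]
    exact F1 s hs
  have Esplit : ∫ s in Set.Ioc (0:ℝ) T, g s
      = (∫ s in Set.Ioc (0:ℝ) βR, g s) + ∫ s in Set.Ioc βR T, g s :=
    split g intg 0 βR T hβR0 hβRT
  have E₀split : ∫ s in Set.Ioc (0:ℝ) T, g₀ s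
      = (∫ s in Set.Ioc (0:ℝ) βR, g₀ s) + ∫ s in Set.Ioc βR T, g₀ s :=
    split g₀ intg₀ 0 βR T hβR0 hβRT
  have E4 : ∫ s in Set.Ioc βR T, g₀ s ≤ 0 := by linarith
  -- now split the m₀ tail further
  set sMid := (βR + αR) / 2 with hsMid
  have h1 : βR ≤ sMid := by rw [hsMid]; linarith
  have h2 : sMid ≤ αR := by rw [hsMid]; linarith
  have h2' : sMid < αR := by rw [hsMid]; linarith
  have h3 : αR ≤ T := hαRT
  have hsMid0 : 0 ≤ sMid := le_trans hβR0 h1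
  have hsMidT : sMid < T := lt_of_lt_of_le h2' hαRT
  have Etail : ∫ s in Set.Ioc βR T, g₀ s
      = (∫ s in Set.Ioc βR sMid, g₀ s) + ((∫ s in Set.Ioc sMid αR, g₀ s)
        + ∫ s in Set.Ioc αR T, g₀ s) := by
    rw [split g₀ intg₀ βR sMid T h1 (le_trans h2 h3), split g₀ intg₀ sMid αR T h2 h3]
  have J2 : 0 ≤ ∫ s in Set.Ioc sMid αR, g₀ s := by
    rw [integral_Ioc_eq_integral_Ioo]
    refine setIntegral_nonneg measurableSet_Ioo fun s hs => ?_
    rw [hg₀eq s (lt_of_lt_of_le hs.2 h3)]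
    exact F2 s (lt_of_lt_of_le hs.2 h3)
  have J3 : 0 ≤ ∫ s in Set.Ioc αR T, g₀ s := by
    rw [integral_Ioc_eq_integral_Ioo]
    refine setIntegral_nonneg measurableSet_Ioo fun s hs => ?_
    rw [hg₀eq s hs.2]
    exact F2 s hs.2
  have hc : 0 < g₀ sMid := by
    rw [hg₀eq sMid hsMidT]
    exact F3 sMid hsMid0 h2'
  have J1 : g₀ sMid * (sMid - βR) ≤ ∫ s in Set.Ioc βR sMid, g₀ s := by
    rw [integral_Ioc_eq_integral_Ioo]
    have hkey := setIntegral_ge_of_const_le_real (μ := volume) (s := Set.Ioo βR sMid)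
      (f := g₀) (c := g₀ sMid) measurableSet_Ioo
      (by rw [Real.volume_Ioo]; exact ENNReal.ofReal_ne_top)
      (fun s hs => (HLPAux.trunc_antitone hΩm hm₀ hCm₀ hC0) hs.2.le)
      ((intg₀ βR sMid).mono_set Set.Ioo_subset_Ioc_self)
    rwa [Real.volume_real_Ioo_of_le (by linarith)] at hkey
  have hpos : 0 < g₀ sMid * (sMid - βR) := mul_pos hc (by linarith)
  linarith
end
end

section
/- Let m₀ ∈ L^∞(Ω) with ∫_Ω m₀ dx > 0 and |{m₀ < 0}| > 0, and let γ ∈ (0,|Ω|) satisfy ∫_γ^{|Ω|} m₀* ds = 0. Then there exists a measurable set E ⊂ Ω with |E| = γ such that the truncated weight m̄₀ = m₀·χ_E has decreasing rearrangement m̄₀*(s) = m₀*(s) for 0 < s < γ and m̄₀*(s) = 0 for γ ≤ s < |Ω|; in particular m̄₀ ≺ m₀. -/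
open MeasureTheory Set Filter Topology
open scoped ENNReal

noncomputable section

lemma TruncAux.hyper (n : ℕ) (c : ℝ) : volume {x : Fin (n+1) → ℝ | x 0 = c} = 0 := by
  have h : {x : Fin (n+1) → ℝ | x 0 = c} = Set.pi univ (fun i => if i = 0 then {c} else univ) := by
    ext x
    simp only [mem_setOf_eq, Set.mem_pi, mem_univ, forall_true_left]
    constructor
    · intro h i
      by_cases hi : i = 0 <;> simp [hi, h]
    · intro h
      have := h 0
      simpa using this
  rw [h, volume_pi_pi]
  exact Finset.prod_eq_zero (Finset.mem_univ (0 : Fin (n+1))) (by simp)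

lemma TruncAux.exists_subset_volume_eq {n : ℕ} {L : Set (Fin (n+1) → ℝ)}
    (hL : MeasurableSet L) (hLb : Bornology.IsBounded L) {r : ℝ≥0∞}
    (hr : r ≤ volume L) : ∃ F, F ⊆ L ∧ MeasurableSet F ∧ volume F = r := by
  rcases eq_or_lt_of_le hr with heq | hlt
  · exact ⟨L, Subset.rfl, hL, heq.symm⟩
  have hfin : volume L < ⊤ := hLb.measure_lt_top
  obtain ⟨R, hR⟩ := hLb.subset_closedBall 0
  have hRmem : ∀ x ∈ L, |x 0| ≤ R := by
    intro x hx
    have := hR hx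
    rw [Metric.mem_closedBall, dist_zero_right] at this
    exact le_trans (norm_le_pi_norm x 0) this
  set H : ℝ → Set (Fin (n+1) → ℝ) := fun t => {x | x 0 ≤ t} with hH
  have hHm : ∀ t, MeasurableSet (H t) := fun t =>
    measurableSet_le (measurable_pi_apply 0) measurable_const
  set v : ℝ → ℝ≥0∞ := fun t => volume (L ∩ H t) with hv
  have hvmono : Monotone v := fun s t hst =>
    measure_mono (inter_subset_inter_right _ (fun x hx => le_trans hx hst))
  have hvlow : v (-(R+1)) = 0 := by
    have : L ∩ H (-(R+1)) = ∅ := by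
      ext x; simp only [mem_inter_iff, mem_empty_iff_false, iff_false, not_and]
      intro hx hx2
      have := (abs_le.mp (hRmem x hx)).1
      simp only [hH, mem_setOf_eq] at hx2
      linarith
    show volume (L ∩ H (-(R+1))) = 0
    rw [this, measure_empty]
  have hvtop : ∀ t, R ≤ t → v t = volume L := by
    intro t ht
    have : L ∩ H t = L := by
      apply inter_eq_left.mpr
      intro x hx
      exact le_trans (abs_le.mp (hRmem x hx)).2 ht
    show volume (L ∩ H t) = volume L
    rw [this]
  set A := {t : ℝ | v t ≤ r} with hA
  have hAne : A.Nonempty := ⟨-(R+1), by rw [hA, mem_setOf_eq, hvlow]; exact zero_le⟩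
  have hAbdd : BddAbove A := by
    refine ⟨R, fun t ht => ?_⟩
    by_contra hc
    push_neg at hc
    rw [hA, mem_setOf_eq, hvtop t hc.le] at ht
    exact absurd ht (not_le.mpr hlt)
  set c := sSup A with hc
  have hmemA : ∀ t < c, t ∈ A := by
    intro t ht
    obtain ⟨a, ha, hta⟩ := exists_lt_of_lt_csSup hAne ht
    exact le_trans (hvmono hta.le) ha
  have hlt' : volume (L ∩ {x | x 0 < c}) ≤ r := by
    have hU : L ∩ {x | x 0 < c} = ⋃ k : ℕ, L ∩ H (c - 1/(k+1)) := by
      ext x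
      simp only [mem_inter_iff, mem_setOf_eq, mem_iUnion, hH]
      constructor
      · rintro ⟨hxL, hxc⟩
        obtain ⟨k, hk⟩ := exists_nat_one_div_lt (sub_pos.mpr hxc)
        exact ⟨k, hxL, by push_cast at hk ⊢; linarith⟩
      · rintro ⟨k, hxL, hxk⟩
        refine ⟨hxL, lt_of_le_of_lt hxk ?_⟩
        have : (0:ℝ) < 1/(k+1) := by positivity
        linarith
    rw [hU, Monotone.measure_iUnion]
    · apply iSup_le
      intro k
      apply hmemA
      have : (0:ℝ) < 1/(k+1) := by positivity
      linarith
    · intro a b hab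
      apply inter_subset_inter_right
      intro x hx
      simp only [hH, mem_setOf_eq] at hx ⊢
      have : (1:ℝ)/(b+1) ≤ 1/(a+1) := by
        apply one_div_le_one_div_of_le (by positivity)
        push_cast; linarith [(Nat.cast_le (α := ℝ)).mpr hab]
      linarith
  have hvcle : v c ≤ r := by
    have hsub : L ∩ H c ⊆ (L ∩ {x | x 0 < c}) ∪ {x | x 0 = c} := by
      rintro x ⟨hxL, hxc⟩
      rcases lt_or_eq_of_le (show x 0 ≤ c from hxc) with h | h
      · exact Or.inl ⟨hxL, h⟩
      · exact Or.inr h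
    calc v c ≤ volume ((L ∩ {x | x 0 < c}) ∪ {x | x 0 = c}) := measure_mono hsub
      _ ≤ volume (L ∩ {x | x 0 < c}) + volume {x : Fin (n+1) → ℝ | x 0 = c} := measure_union_le _ _
      _ ≤ r + 0 := by rw [TruncAux.hyper]; exact add_le_add hlt' le_rfl
      _ = r := add_zero r
  have hvcge : r ≤ v c := by
    have hI : L ∩ H c = ⋂ k : ℕ, L ∩ H (c + 1/(k+1)) := by
      ext x
      simp only [mem_inter_iff, mem_iInter, hH, mem_setOf_eq]
      constructor
      · rintro ⟨hxL, hxc⟩ k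
        have : (0:ℝ) < 1/(k+1) := by positivity
        exact ⟨hxL, by linarith⟩
      · intro h
        refine ⟨(h 0).1, ?_⟩
        by_contra hcon
        push_neg at hcon
        obtain ⟨k, hk⟩ := exists_nat_one_div_lt (sub_pos.mpr hcon)
        have := (h k).2
        push_cast at hk
        linarith
    show r ≤ volume (L ∩ H c)
    rw [hI, Antitone.measure_iInter]
    · apply le_iInf
      intro k
      have hnotA : c + 1/(k+1) ∉ A := by
        intro hmem
        have := le_csSup hAbdd hmem
        have h0 : (0:ℝ) < 1/(k+1) := by positivity
        linarith
      exact (not_le.mp hnotA).le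
    · intro a b hab
      apply inter_subset_inter_right
      intro x hx
      simp only [hH, mem_setOf_eq] at hx ⊢
      have : (1:ℝ)/(b+1) ≤ 1/(a+1) := by
        apply one_div_le_one_div_of_le (by positivity)
        push_cast; linarith [(Nat.cast_le (α := ℝ)).mpr hab]
      linarith
    · exact fun k => ((hL.inter (hHm _)).nullMeasurableSet)
    · exact ⟨0, (lt_of_le_of_lt (measure_mono inter_subset_left) hfin).ne⟩
  exact ⟨L ∩ H c, inter_subset_left, hL.inter (hHm c), le_antisymm hvcle hvcge⟩

theorem exists_truncated_weight
    (N : ℕ) (Ω : Set (Fin N → ℝ)) (hΩo : IsOpen Ω) (hΩb : Bornology.IsBounded Ω)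
    (m₀ : (Fin N → ℝ) → ℝ) (hm₀ : Measurable m₀)
    (hm₀b : ∃ C : ℝ, ∀ᵐ x ∂(volume.restrict Ω), |m₀ x| ≤ C)
    (hm₀int : 0 < ∫ x in Ω, m₀ x)
    (hm₀neg : 0 < volume {x ∈ Ω | m₀ x < 0})
    (γ : ℝ) (hγ : γ ∈ Ioo (0 : ℝ) (volume Ω).toReal)
    (hγ0 : ∫ s in Ioo γ (volume Ω).toReal, decRearr Ω m₀ s = 0) :
    ∃ E : Set (Fin N → ℝ), MeasurableSet E ∧ E ⊆ Ω ∧ volume E = ENNReal.ofReal γ ∧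
      (∀ s ∈ Ioo (0 : ℝ) γ, decRearr Ω (E.indicator m₀) s = decRearr Ω m₀ s) ∧
      (∀ s ∈ Ico γ (volume Ω).toReal, decRearr Ω (E.indicator m₀) s = 0) ∧
      Prec Ω (E.indicator m₀) m₀ := by
  cases N with
  | zero =>
    exfalso
    obtain ⟨x₀, hx₀Ω, hx₀⟩ := nonempty_of_measure_ne_zero hm₀neg.ne'
    have hall : ∀ x, m₀ x ≤ 0 := by
      intro x
      have : x = x₀ := funext fun i => i.elim0
      rw [this]
      exact hx₀.le
    have : ∫ x in Ω, m₀ x ≤ 0 := integral_nonpos hall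
    linarith
  | succ n =>
  set V := (volume Ω).toReal with hVdef
  have hΩm : MeasurableSet Ω := hΩo.measurableSet
  have hΩfin : volume Ω ≠ ⊤ := hΩb.measure_lt_top.ne
  have hVvol : ENNReal.ofReal V = volume Ω := ENNReal.ofReal_toReal hΩfin
  have hγpos : 0 < γ := hγ.1
  have hγV : γ < V := hγ.2
  have hVpos : 0 < V := hγpos.trans hγV
  have hΩpos : 0 < volume Ω := by rw [← hVvol]; exact ENNReal.ofReal_pos.mpr hVpos
  obtain ⟨C₀, hC₀⟩ := hm₀b
  set C := max C₀ 0 with hCdef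
  have hCnn : 0 ≤ C := le_max_right _ _
  have hZ : volume {x | x ∈ Ω ∧ C < |m₀ x|} = 0 := by
    have h1 : ∀ᵐ x ∂(volume.restrict Ω), |m₀ x| ≤ C :=
      hC₀.mono fun x hx => le_trans hx (le_max_left _ _)
    have h2 := (ae_restrict_iff' hΩm).mp h1
    rw [ae_iff] at h2
    have hset : {x | x ∈ Ω ∧ C < |m₀ x|} = {x | ¬ (x ∈ Ω → |m₀ x| ≤ C)} := by
      ext x
      simp only [mem_setOf_eq, Classical.not_imp, not_le]
    rw [hset]
    exact h2
  -- facts about the distribution function of m₀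
  have hDanti : Antitone (distrib Ω m₀) := fun a b hab =>
    measure_mono (fun x hx => ⟨hx.1, lt_of_le_of_lt hab hx.2⟩)
  have hDle : ∀ (f : (Fin (n+1) → ℝ) → ℝ) (t : ℝ), distrib Ω f t ≤ volume Ω :=
    fun f t => measure_mono (fun x hx => hx.1)
  have hDC : ∀ t, C ≤ t → distrib Ω m₀ t = 0 := by
    intro t ht
    refine measure_mono_null ?_ hZ
    intro x hx
    exact ⟨hx.1, lt_of_le_of_lt ht (lt_of_lt_of_le hx.2 (le_abs_self _))⟩
  have hDlow : ∀ t, t < -C → distrib Ω m₀ t = volume Ω := by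
    intro t ht
    refine le_antisymm (hDle _ t) ?_
    have hdn : volume (Ω \ {x | x ∈ Ω ∧ C < |m₀ x|}) = volume Ω := measure_diff_null hZ
    rw [← hdn]
    apply measure_mono
    rintro x ⟨hxΩ, hxn⟩
    refine ⟨hxΩ, ?_⟩
    have habs : |m₀ x| ≤ C := by
      by_contra h
      exact hxn ⟨hxΩ, not_le.mp h⟩
    have := (abs_le.mp habs).1
    linarith
  have hSsub : ∀ s : ℝ, {t | ENNReal.ofReal s < distrib Ω m₀ t} ⊆ Iic C := by
    intro s t ht
    by_contra h
    simp only [mem_Iic, not_le] at h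
    rw [mem_setOf_eq, hDC t h.le] at ht
    exact absurd ht (not_lt.mpr zero_le)
  have hSbdd : ∀ s : ℝ, BddAbove {t | ENNReal.ofReal s < distrib Ω m₀ t} :=
    fun s => ⟨C, hSsub s⟩
  have hSmem : ∀ s : ℝ, s < V → -(C+1) ∈ {t | ENNReal.ofReal s < distrib Ω m₀ t} := by
    intro s hs
    rw [mem_setOf_eq, hDlow _ (by linarith)]
    rcases le_or_gt s 0 with h | h
    · rw [ENNReal.ofReal_eq_zero.mpr h]
      exact hΩpos
    · rw [← hVvol]
      exact (ENNReal.ofReal_lt_ofReal_iff hVpos).mpr hs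
  have hSne : ∀ s : ℝ, s < V → {t | ENNReal.ofReal s < distrib Ω m₀ t}.Nonempty :=
    fun s hs => ⟨_, hSmem s hs⟩
  have hlb : ∀ s : ℝ, s < V → -(C+1) ≤ decRearr Ω m₀ s :=
    fun s hs => le_csSup (hSbdd s) (hSmem s hs)
  have hanti : AntitoneOn (decRearr Ω m₀) (Iio V) := by
    intro s hs s' hs' hss'
    exact csSup_le_csSup (hSbdd s) (hSne s' hs')
      (fun t ht => lt_of_le_of_lt (ENNReal.ofReal_le_ofReal hss') ht)
  -- integrability of the decreasing rearrangement of m₀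
  set g : ℝ → ℝ := fun s => if s < V then decRearr Ω m₀ s else -(C+1) with hg
  have hganti : AntitoneOn g (Icc 0 V) := by
    intro s hs s' hs' hss'
    by_cases h' : s' < V
    · have h : s < V := lt_of_le_of_lt hss' h'
      simp only [hg, if_pos h, if_pos h']
      exact hanti h h' hss'
    · simp only [hg, if_neg h']
      by_cases h : s < V
      · simp only [if_pos h]
        exact hlb s h
      · simp only [if_neg h]
        exact le_rfl
  have hgint : IntegrableOn g (Icc 0 V) := AntitoneOn.integrableOn_isCompact isCompact_Icc hganti
  have hIoo : IntegrableOn (decRearr Ω m₀) (Ioo 0 V) := by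
    refine (hgint.mono_set Ioo_subset_Icc_self).congr_fun ?_ measurableSet_Ioo
    intro s hs
    simp only [hg, if_pos hs.2]
  have hInt : IntegrableOn (decRearr Ω m₀) (Ioc 0 V) :=
    (integrableOn_Ioc_iff_integrableOn_Ioo).mpr hIoo
  -- splitting integrals
  have hsplit : ∀ (f : ℝ → ℝ) (a b c : ℝ), a ≤ b → b ≤ c → IntegrableOn f (Ioc a b) →
      IntegrableOn f (Ioc b c) →
      ∫ s in Ioc a c, f s = (∫ s in Ioc a b, f s) + ∫ s in Ioc b c, f s := by
    intro f a b c hab hbc h1 h2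
    rw [← Ioc_union_Ioc_eq_Ioc hab hbc]
    exact setIntegral_union (Ioc_disjoint_Ioc_of_le le_rfl) measurableSet_Ioc h1 h2
  have hγ0' : ∫ s in Ioc γ V, decRearr Ω m₀ s = 0 := by
    rw [integral_Ioc_eq_integral_Ioo]
    exact hγ0
  -- nonnegativity of partial integrals beyond γ
  have hpartial : ∀ T, γ ≤ T → T ≤ V → 0 ≤ ∫ s in Ioc γ T, decRearr Ω m₀ s := by
    intro T hγT hTV
    rcases eq_or_lt_of_le hTV with rfl | hTV'
    · rw [hγ0']
    · have hs : ∫ s in Ioc γ V, decRearr Ω m₀ s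
          = (∫ s in Ioc γ T, decRearr Ω m₀ s) + ∫ s in Ioc T V, decRearr Ω m₀ s :=
        hsplit _ γ T V hγT hTV
          (hInt.mono_set (Ioc_subset_Ioc hγpos.le hTV))
          (hInt.mono_set (Ioc_subset_Ioc (hγpos.trans_le hγT).le le_rfl))
      rcases le_or_gt 0 (decRearr Ω m₀ T) with hT0 | hT0
      · apply setIntegral_nonneg measurableSet_Ioc
        intro s hs'
        have := hanti (mem_Iio.mpr (lt_of_le_of_lt hs'.2 hTV')) (mem_Iio.mpr hTV') hs'.2
        linarith
      · have h2 : ∫ s in Ioc T V, decRearr Ω m₀ s ≤ 0 := by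
          rw [integral_Ioc_eq_integral_Ioo]
          apply setIntegral_nonpos measurableSet_Ioo
          intro s hs'
          have := hanti (mem_Iio.mpr hTV') (mem_Iio.mpr hs'.2) hs'.1.le
          linarith
        rw [hγ0'] at hs
        linarith
  -- a negative part of positive measure
  obtain ⟨k, hk⟩ : ∃ k : ℕ, 0 < volume {x | x ∈ Ω ∧ m₀ x ≤ -(1/(k+1))} := by
    by_contra h
    push_neg at h
    have hz : volume {x | x ∈ Ω ∧ m₀ x < 0} = 0 := by
      have hU : {x | x ∈ Ω ∧ m₀ x < 0} = ⋃ k : ℕ, {x | x ∈ Ω ∧ m₀ x ≤ -(1/(k+1))} := by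
        ext x
        simp only [mem_setOf_eq, mem_iUnion]
        constructor
        · rintro ⟨hxΩ, hx⟩
          obtain ⟨k, hk⟩ := exists_nat_one_div_lt (show (0:ℝ) < -(m₀ x) by linarith)
          exact ⟨k, hxΩ, by push_cast at hk ⊢; linarith⟩
        · rintro ⟨k, hxΩ, hx⟩
          have : (0:ℝ) < 1/(k+1) := by positivity
          exact ⟨hxΩ, by linarith⟩
      rw [hU]
      exact measure_iUnion_null (fun k => le_antisymm (h k) zero_le)
    rw [hz] at hm₀neg
    exact lt_irrefl 0 hm₀neg
  set ε : ℝ := 1/((k:ℝ)+1) with hε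
  have hεpos : 0 < ε := by positivity
  set δ := volume {x | x ∈ Ω ∧ m₀ x ≤ -ε} with hδ
  have hNm : MeasurableSet {x | x ∈ Ω ∧ m₀ x ≤ -ε} := hΩm.inter (hm₀ measurableSet_Iic)
  have hδfin : δ ≠ ⊤ := ((measure_mono (fun x hx => hx.1)).trans_lt hΩb.measure_lt_top).ne
  have hδpos : 0 < δ.toReal := ENNReal.toReal_pos hk.ne' hδfin
  have hkey : ∀ t : ℝ, -ε ≤ t → distrib Ω m₀ t + δ ≤ volume Ω := by
    intro t ht
    have hdisj : Disjoint {x | x ∈ Ω ∧ t < m₀ x} {x | x ∈ Ω ∧ m₀ x ≤ -ε} := by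
      rw [disjoint_left]
      rintro x ⟨_, h1⟩ ⟨_, h2⟩
      linarith
    calc distrib Ω m₀ t + δ
        = volume ({x | x ∈ Ω ∧ t < m₀ x} ∪ {x | x ∈ Ω ∧ m₀ x ≤ -ε}) :=
          (measure_union hdisj hNm).symm
      _ ≤ volume Ω := measure_mono (union_subset (fun x hx => hx.1) (fun x hx => hx.1))
  set b : ℝ := V - min δ.toReal (V - γ) / 2 with hb
  have hminpos : 0 < min δ.toReal (V - γ) := lt_min hδpos (by linarith)
  have hbγ : γ < b := by
    have : min δ.toReal (V - γ) ≤ V - γ := min_le_right _ _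
    rw [hb]; linarith
  have hbV : b < V := by rw [hb]; linarith
  have hnegbd : ∀ s, b < s → s < V → decRearr Ω m₀ s ≤ -ε := by
    intro s hbs hsV
    apply csSup_le (hSne s hsV)
    intro t ht
    by_contra hc
    push_neg at hc
    have h1 : distrib Ω m₀ t + δ ≤ volume Ω := hkey t (by linarith)
    have h2 : ENNReal.ofReal s + δ < volume Ω :=
      lt_of_lt_of_le (ENNReal.add_lt_add_right hδfin ht) h1
    have h3 : volume Ω ≤ ENNReal.ofReal s + δ := by
      have hsV' : V ≤ s + δ.toReal := by
        have : min δ.toReal (V - γ) ≤ δ.toReal := min_le_left _ _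
        rw [hb] at hbs
        linarith
      calc volume Ω = ENNReal.ofReal V := hVvol.symm
        _ ≤ ENNReal.ofReal (s + δ.toReal) := ENNReal.ofReal_le_ofReal hsV'
        _ = ENNReal.ofReal s + ENNReal.ofReal δ.toReal :=
            ENNReal.ofReal_add (by linarith [hγpos.trans (hbγ.trans hbs)]) hδpos.le
        _ = ENNReal.ofReal s + δ := by rw [ENNReal.ofReal_toReal hδfin]
    exact absurd h2 (not_lt.mpr h3)
  -- positivity of the rearrangement at γ
  have ht₀pos : 0 < decRearr Ω m₀ γ := by
    by_contra h
    push_neg at h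
    have h1 : ∫ s in Ioc γ b, decRearr Ω m₀ s ≤ 0 := by
      apply setIntegral_nonpos measurableSet_Ioc
      intro s hs'
      have := hanti (mem_Iio.mpr hγV) (mem_Iio.mpr (lt_of_le_of_lt hs'.2 hbV)) hs'.1.le
      linarith
    have h2 : ∫ s in Ioc b V, decRearr Ω m₀ s ≤ -ε * (V - b) := by
      rw [integral_Ioc_eq_integral_Ioo]
      have hmono := setIntegral_mono_on
        (hIoo.mono_set (Ioo_subset_Ioo (hγpos.trans hbγ).le le_rfl))
        (integrableOn_const measure_Ioo_lt_top.ne)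
        measurableSet_Ioo
        (fun s hs => hnegbd s hs.1 hs.2)
      rw [setIntegral_const] at hmono
      rw [Real.volume_real_Ioo_of_le (by linarith)] at hmono
      calc ∫ s in Ioo b V, decRearr Ω m₀ s ≤ (V - b) • (-ε) := hmono
        _ = -ε * (V - b) := by rw [smul_eq_mul]; ring
    have hsum : ∫ s in Ioc γ V, decRearr Ω m₀ s
        = (∫ s in Ioc γ b, decRearr Ω m₀ s) + ∫ s in Ioc b V, decRearr Ω m₀ s :=
      hsplit _ γ b V hbγ.le hbV.le
        (hInt.mono_set (Ioc_subset_Ioc hγpos.le hbV.le))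
        (hInt.mono_set (Ioc_subset_Ioc (hγpos.trans hbγ).le le_rfl))
    rw [hγ0'] at hsum
    have : -ε * (V - b) < 0 := by
      apply mul_neg_of_neg_of_pos (by linarith)
      linarith
    linarith
  set t₀ := decRearr Ω m₀ γ with ht₀def
  have hlower : ∀ t, t < t₀ → ENNReal.ofReal γ < distrib Ω m₀ t := by
    intro t ht
    obtain ⟨t', ht', htt'⟩ := exists_lt_of_lt_csSup (hSne γ hγV) ht
    exact lt_of_lt_of_le ht' (hDanti htt'.le)
  have hupper : distrib Ω m₀ t₀ ≤ ENNReal.ofReal γ := by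
    by_contra h
    push_neg at h
    have hU : {x | x ∈ Ω ∧ t₀ < m₀ x} = ⋃ k : ℕ, {x | x ∈ Ω ∧ t₀ + 1/(k+1) < m₀ x} := by
      ext x
      simp only [mem_setOf_eq, mem_iUnion]
      constructor
      · rintro ⟨hxΩ, hx⟩
        obtain ⟨j, hj⟩ := exists_nat_one_div_lt (sub_pos.mpr hx)
        exact ⟨j, hxΩ, by push_cast at hj ⊢; linarith⟩
      · rintro ⟨j, hxΩ, hx⟩
        have : (0:ℝ) < 1/((j:ℝ)+1) := by positivity
        exact ⟨hxΩ, by linarith⟩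
    have hmono : Monotone (fun j : ℕ => {x | x ∈ Ω ∧ t₀ + 1/((j:ℝ)+1) < m₀ x}) := by
      intro a c hac x hx
      refine ⟨hx.1, ?_⟩
      have h1 : (1:ℝ)/((c:ℝ)+1) ≤ 1/((a:ℝ)+1) := by
        apply one_div_le_one_div_of_le (by positivity)
        push_cast
        linarith [(Nat.cast_le (α := ℝ)).mpr hac]
      have := hx.2
      linarith
    have heq : distrib Ω m₀ t₀ = ⨆ j : ℕ, volume {x | x ∈ Ω ∧ t₀ + 1/((j:ℝ)+1) < m₀ x} := by
      show volume {x | x ∈ Ω ∧ t₀ < m₀ x} = _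
      rw [hU, hmono.measure_iUnion]
    rw [heq, lt_iSup_iff] at h
    obtain ⟨j, hj⟩ := h
    have hmem : t₀ + 1/((j:ℝ)+1) ∈ {t | ENNReal.ofReal γ < distrib Ω m₀ t} := hj
    have hcs := le_csSup (hSbdd γ) hmem
    have hp : (0:ℝ) < 1/((j:ℝ)+1) := by positivity
    have hle : t₀ + 1/((j:ℝ)+1) ≤ t₀ := hcs
    linarith
  have hgeq : ENNReal.ofReal γ ≤ volume {x | x ∈ Ω ∧ t₀ ≤ m₀ x} := by
    have hI : {x | x ∈ Ω ∧ t₀ ≤ m₀ x} = ⋂ j : ℕ, {x | x ∈ Ω ∧ t₀ - 1/((j:ℝ)+1) < m₀ x} := by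
      ext x
      simp only [mem_setOf_eq, mem_iInter]
      constructor
      · rintro ⟨hxΩ, hx⟩ j
        have : (0:ℝ) < 1/((j:ℝ)+1) := by positivity
        exact ⟨hxΩ, by linarith⟩
      · intro hx
        refine ⟨(hx 0).1, ?_⟩
        by_contra hcon
        push_neg at hcon
        obtain ⟨j, hj⟩ := exists_nat_one_div_lt (sub_pos.mpr hcon)
        have := (hx j).2
        linarith
    rw [hI, Antitone.measure_iInter]
    · apply le_iInf
      intro j
      have : (0:ℝ) < 1/((j:ℝ)+1) := by positivity
      exact (hlower _ (by linarith)).le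
    · intro a c hac x hx
      refine ⟨hx.1, ?_⟩
      have h1 : (1:ℝ)/((c:ℝ)+1) ≤ 1/((a:ℝ)+1) := by
        apply one_div_le_one_div_of_le (by positivity)
        push_cast
        linarith [(Nat.cast_le (α := ℝ)).mpr hac]
      have := hx.2
      linarith
    · exact fun j => (hΩm.inter (hm₀ measurableSet_Ioi)).nullMeasurableSet
    · exact ⟨0, ((measure_mono (fun x hx => hx.1)).trans_lt hΩb.measure_lt_top).ne⟩
  -- construction of E
  set A := {x | x ∈ Ω ∧ t₀ < m₀ x} with hAdef
  set Lv := {x | x ∈ Ω ∧ m₀ x = t₀} with hLdef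
  have hAm : MeasurableSet A := hΩm.inter (hm₀ measurableSet_Ioi)
  have hLm : MeasurableSet Lv := hΩm.inter (hm₀ (measurableSet_singleton t₀))
  have hAvol : volume A = distrib Ω m₀ t₀ := rfl
  have hdisj : Disjoint A Lv := by
    rw [disjoint_left]
    rintro x ⟨_, h1⟩ ⟨_, h2⟩
    rw [h2] at h1
    exact lt_irrefl _ h1
  have hunion : A ∪ Lv = {x | x ∈ Ω ∧ t₀ ≤ m₀ x} := by
    ext x
    simp only [mem_union, hAdef, hLdef, mem_setOf_eq]
    constructor
    · rintro (⟨h1, h2⟩ | ⟨h1, h2⟩)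
      · exact ⟨h1, h2.le⟩
      · exact ⟨h1, h2.ge⟩
    · rintro ⟨h1, h2⟩
      rcases lt_or_eq_of_le h2 with h | h
      · exact Or.inl ⟨h1, h⟩
      · exact Or.inr ⟨h1, h.symm⟩
  have hLge : ENNReal.ofReal γ - distrib Ω m₀ t₀ ≤ volume Lv := by
    rw [tsub_le_iff_left]
    calc ENNReal.ofReal γ ≤ volume {x | x ∈ Ω ∧ t₀ ≤ m₀ x} := hgeq
      _ = volume (A ∪ Lv) := by rw [hunion]
      _ = volume A + volume Lv := measure_union hdisj hLm
      _ = distrib Ω m₀ t₀ + volume Lv := by rw [hAvol]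
  obtain ⟨F, hFL, hFm, hFvol⟩ :=
    TruncAux.exists_subset_volume_eq hLm (hΩb.subset (fun x hx => hx.1)) hLge
  set E := A ∪ F with hEdef
  have hEm : MeasurableSet E := hAm.union hFm
  have hEΩ : E ⊆ Ω := union_subset (fun x hx => hx.1) (fun x hx => (hFL hx).1)
  have hAF : Disjoint A F := hdisj.mono_right hFL
  have hEvol : volume E = ENNReal.ofReal γ := by
    rw [hEdef, measure_union hAF hFm, hAvol, hFvol]
    exact add_tsub_cancel_of_le hupper
  have hElb : ∀ x ∈ E, t₀ ≤ m₀ x := by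
    rintro x (hx | hx)
    · exact hx.2.le
    · exact ((hFL hx).2).ge
  have hEub : ∀ x, x ∈ Ω → t₀ < m₀ x → x ∈ E := fun x h1 h2 => Or.inl ⟨h1, h2⟩
  -- the distribution function of the truncated weight
  set mb := E.indicator m₀ with hmb
  have hd1 : ∀ t, t₀ ≤ t → distrib Ω mb t = distrib Ω m₀ t := by
    intro t ht
    have hset : {x | x ∈ Ω ∧ t < mb x} = {x | x ∈ Ω ∧ t < m₀ x} := by
      ext x
      simp only [mem_setOf_eq, hmb]
      constructor
      · rintro ⟨hxΩ, hx⟩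
        by_cases hxE : x ∈ E
        · rw [indicator_of_mem hxE] at hx
          exact ⟨hxΩ, hx⟩
        · rw [indicator_of_notMem hxE] at hx
          exfalso
          linarith
      · rintro ⟨hxΩ, hx⟩
        have hxE : x ∈ E := hEub x hxΩ (lt_of_le_of_lt ht hx)
        exact ⟨hxΩ, by rw [indicator_of_mem hxE]; exact hx⟩
    show volume {x | x ∈ Ω ∧ t < mb x} = volume {x | x ∈ Ω ∧ t < m₀ x}
    rw [hset]
  have hd2 : ∀ t, 0 ≤ t → t < t₀ → distrib Ω mb t = ENNReal.ofReal γ := by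
    intro t ht0 ht
    have hset : {x | x ∈ Ω ∧ t < mb x} = E := by
      ext x
      simp only [mem_setOf_eq, hmb]
      constructor
      · rintro ⟨hxΩ, hx⟩
        by_contra hxE
        rw [indicator_of_notMem hxE] at hx
        linarith
      · intro hxE
        refine ⟨hEΩ hxE, ?_⟩
        rw [indicator_of_mem hxE]
        exact lt_of_lt_of_le ht (hElb x hxE)
    show volume {x | x ∈ Ω ∧ t < mb x} = ENNReal.ofReal γ
    rw [hset, hEvol]
  have hd3 : ∀ t, t < 0 → distrib Ω mb t = volume Ω := by
    intro t ht
    have hset : {x | x ∈ Ω ∧ t < mb x} = Ω := by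
      ext x
      simp only [mem_setOf_eq, hmb]
      constructor
      · exact fun hx => hx.1
      · intro hxΩ
        refine ⟨hxΩ, ?_⟩
        by_cases hxE : x ∈ E
        · rw [indicator_of_mem hxE]
          have := hElb x hxE
          linarith
        · rw [indicator_of_notMem hxE]
          exact ht
    show volume {x | x ∈ Ω ∧ t < mb x} = volume Ω
    rw [hset]
  -- first conclusion : the rearrangements agree on (0, γ)
  have hc1 : ∀ s ∈ Ioo (0:ℝ) γ, decRearr Ω mb s = decRearr Ω m₀ s := by
    intro s hs
    have hofs : ENNReal.ofReal s < ENNReal.ofReal γ :=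
      (ENNReal.ofReal_lt_ofReal_iff hγpos).mpr hs.2
    have hset : {t | ENNReal.ofReal s < distrib Ω mb t}
        = {t | ENNReal.ofReal s < distrib Ω m₀ t} := by
      ext t
      simp only [mem_setOf_eq]
      rcases lt_or_ge t t₀ with h | h
      · constructor
        · intro _
          exact hofs.trans (hlower t h)
        · intro _
          rcases lt_or_ge t 0 with h0 | h0
          · rw [hd3 t h0, ← hVvol]
            exact (ENNReal.ofReal_lt_ofReal_iff hVpos).mpr (hs.2.trans hγV)
          · rw [hd2 t h0 h]
            exact hofs
      · rw [hd1 t h]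
    show sSup {t | ENNReal.ofReal s < distrib Ω mb t}
        = sSup {t | ENNReal.ofReal s < distrib Ω m₀ t}
    rw [hset]
  -- second conclusion : the rearrangement vanishes on [γ, V)
  have hc2 : ∀ s ∈ Ico γ V, decRearr Ω mb s = 0 := by
    intro s hs
    have hset : {t | ENNReal.ofReal s < distrib Ω mb t} = Iio 0 := by
      ext t
      simp only [mem_setOf_eq, mem_Iio]
      constructor
      · intro h
        by_contra hc
        push_neg at hc
        have hle : distrib Ω mb t ≤ ENNReal.ofReal γ := by
          rcases lt_or_ge t t₀ with h' | h'
          · rw [hd2 t hc h']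
          · rw [hd1 t h']
            exact (hDanti h').trans hupper
        have hγs : ENNReal.ofReal γ ≤ ENNReal.ofReal s := ENNReal.ofReal_le_ofReal hs.1
        exact absurd h (not_lt.mpr (hle.trans hγs))
      · intro h
        rw [hd3 t h, ← hVvol]
        exact (ENNReal.ofReal_lt_ofReal_iff hVpos).mpr hs.2
    show sSup {t | ENNReal.ofReal s < distrib Ω mb t} = 0
    rw [hset, csSup_Iio]
  have hcV : decRearr Ω mb V = 0 := by
    have hset : {t | ENNReal.ofReal V < distrib Ω mb t} = ∅ := by
      ext t
      simp only [mem_setOf_eq, mem_empty_iff_false, iff_false, not_lt]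
      rw [hVvol]
      exact hDle mb t
    show sSup {t | ENNReal.ofReal V < distrib Ω mb t} = 0
    rw [hset, Real.sSup_empty]
  -- integrability of the rearrangement of the truncated weight
  have hIntb : IntegrableOn (decRearr Ω mb) (Ioc 0 V) := by
    have hind : Integrable ((Ioo (0:ℝ) γ).indicator (decRearr Ω m₀)) volume :=
      (integrable_indicator_iff measurableSet_Ioo).mpr
        (hInt.mono_set (fun x hx => ⟨hx.1, hx.2.le.trans hγV.le⟩))
    refine hind.integrableOn.congr_fun ?_ measurableSet_Ioc
    intro s hs
    rcases lt_or_ge s γ with h | h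
    · have hs' : s ∈ Ioo (0:ℝ) γ := ⟨hs.1, h⟩
      rw [indicator_of_mem hs']
      exact (hc1 s hs').symm
    · rw [indicator_of_notMem (fun hx => absurd hx.2 (not_lt.mpr h))]
      rcases eq_or_lt_of_le hs.2 with heq | hlt
      · rw [heq]
        exact hcV.symm
      · exact (hc2 s ⟨h, hlt⟩).symm
  -- the integral identities
  have hIoc0γ : ∫ s in Ioc 0 γ, decRearr Ω mb s = ∫ s in Ioc 0 γ, decRearr Ω m₀ s := by
    rw [integral_Ioc_eq_integral_Ioo, integral_Ioc_eq_integral_Ioo]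
    exact setIntegral_congr_fun measurableSet_Ioo (fun s hs => hc1 s hs)
  have hIocγ : ∀ T, γ ≤ T → T ≤ V → ∫ s in Ioc γ T, decRearr Ω mb s = 0 := by
    intro T h1 h2
    have : EqOn (decRearr Ω mb) (fun _ => (0:ℝ)) (Ioc γ T) := by
      intro s hs
      rcases eq_or_lt_of_le (hs.2.trans h2) with heq | hlt
      · rw [heq]
        exact hcV
      · exact hc2 s ⟨hs.1.le, hlt⟩
    rw [setIntegral_congr_fun measurableSet_Ioc this, integral_zero]
  have hbar : ∀ T, γ < T → T ≤ V →
      ∫ s in Ioo 0 T, decRearr Ω mb s = ∫ s in Ioc 0 γ, decRearr Ω m₀ s := by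
    intro T h1 h2
    rw [← integral_Ioc_eq_integral_Ioo,
      hsplit _ 0 γ T hγpos.le h1.le
        (hIntb.mono_set (Ioc_subset_Ioc le_rfl hγV.le))
        (hIntb.mono_set (Ioc_subset_Ioc hγpos.le h2)),
      hIocγ T h1.le h2, add_zero, hIoc0γ]
  have horig : ∀ T, γ < T → T ≤ V →
      ∫ s in Ioo 0 T, decRearr Ω m₀ s
        = (∫ s in Ioc 0 γ, decRearr Ω m₀ s) + ∫ s in Ioc γ T, decRearr Ω m₀ s := by
    intro T h1 h2
    rw [← integral_Ioc_eq_integral_Ioo]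
    exact hsplit _ 0 γ T hγpos.le h1.le
      (hInt.mono_set (Ioc_subset_Ioc le_rfl hγV.le))
      (hInt.mono_set (Ioc_subset_Ioc hγpos.le h2))
  refine ⟨E, hEm, hEΩ, hEvol, hc1, hc2, ?_, ?_⟩
  · -- first part of Prec
    intro T hT
    rcases le_or_gt T γ with hTγ | hTγ
    · apply le_of_eq
      apply setIntegral_congr_fun measurableSet_Ioo
      intro s hs
      exact hc1 s ⟨hs.1, lt_of_lt_of_le hs.2 hTγ⟩
    · rw [hbar T hTγ hT.2, horig T hTγ hT.2]
      linarith [hpartial T hTγ.le hT.2]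
  · -- second part of Prec
    rw [hbar V hγV le_rfl, horig V hγV le_rfl, hγ0', add_zero]
end
end

section
/- The map m ↦ G_m from L^∞(Ω) to bounded operators on H¹₀(Ω) is sequentially weak*-to-norm continuous: if m_i ⇀* m in L^∞(Ω), then ‖G_{m_i} − G_m‖_{op} → 0. -/
open MeasureTheory Set Filter Topology
open scoped ENNReal RealInnerProductSpace

noncomputable section

theorem Gm_weakStar_to_norm_continuous
    (N : ℕ) (Ω : Set (Fin N → ℝ)) (hΩo : IsOpen Ω) (hΩb : Bornology.IsBounded Ω)
    (H : Type) [NormedAddCommGroup H] [InnerProductSpace ℝ H] [CompleteSpace H]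
    (ι : H →L[ℝ] Lp ℝ 2 (volume.restrict Ω)) (hι : IsCompactOperator ι)
    (mseq : ℕ → (Fin N → ℝ) → ℝ) (m : (Fin N → ℝ) → ℝ)
    (hmseq : ∀ n, Measurable (mseq n)) (hm : Measurable m)
    (M : ℝ) (hMseq : ∀ n, ∀ᵐ x ∂(volume.restrict Ω), |mseq n x| ≤ M)
    (hM : ∀ᵐ x ∂(volume.restrict Ω), |m x| ≤ M)
    -- weak* convergence `mseq n ⇀* m` in `L^∞(Ω)`
    (hweak : ∀ g : (Fin N → ℝ) → ℝ, IntegrableOn g Ω →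
      Tendsto (fun n => ∫ x in Ω, mseq n x * g x) atTop (𝓝 (∫ x in Ω, m x * g x)))
    (Gseq : ℕ → H →L[ℝ] H) (G : H →L[ℝ] H)
    (hGseq : ∀ n, ∀ f φ : H, ⟪Gseq n f, φ⟫ =
      ∫ x in Ω, mseq n x * (ι f : (Fin N → ℝ) → ℝ) x * (ι φ : (Fin N → ℝ) → ℝ) x)
    (hG : ∀ f φ : H, ⟪G f, φ⟫ =
      ∫ x in Ω, m x * (ι f : (Fin N → ℝ) → ℝ) x * (ι φ : (Fin N → ℝ) → ℝ) x) :
    Tendsto (fun n => ‖Gseq n - G‖) atTop (𝓝 0) := by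
  classical
  set c : ℝ := 2 * max M 0 + 1 with hcdef
  have hc0 : (0 : ℝ) < c := by positivity
  set w : ℕ → (Fin N → ℝ) → ℝ := fun n x => mseq n x - m x with hwdef
  have hwm : ∀ n, AEStronglyMeasurable (w n) (volume.restrict Ω) := fun n =>
    ((hmseq n).sub hm).aestronglyMeasurable
  have hwb : ∀ n, ∀ᵐ x ∂(volume.restrict Ω), |w n x| ≤ c := by
    intro n
    filter_upwards [hMseq n, hM] with x h1 h2
    have h3 : |mseq n x - m x| ≤ |mseq n x| + |m x| := abs_sub _ _
    have h4 : M ≤ max M 0 := le_max_left _ _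
    simp only [hwdef, hcdef]
    linarith
  -- integrability of products of two L² functions
  have hInt2 : ∀ u v : Lp ℝ 2 (volume.restrict Ω),
      Integrable (fun x => (u : (Fin N → ℝ) → ℝ) x * v x) (volume.restrict Ω) := by
    intro u v
    have h := MeasureTheory.L2.integrable_inner (𝕜 := ℝ) u v
    simpa [RCLike.inner_apply, conj_trivial, mul_comm] using h
  -- integrability of a bounded function times a product of two L² functions
  have hIw : ∀ (g : (Fin N → ℝ) → ℝ), AEStronglyMeasurable g (volume.restrict Ω) →
      (∀ᵐ x ∂(volume.restrict Ω), |g x| ≤ c) → ∀ u v : Lp ℝ 2 (volume.restrict Ω),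
      Integrable (fun x => g x * (u : (Fin N → ℝ) → ℝ) x * v x) (volume.restrict Ω) := by
    intro g hg hgb u v
    have h := (hInt2 u v).bdd_mul hg (by simpa [Real.norm_eq_abs] using hgb)
    simpa [mul_assoc] using h
  -- the key quantitative bound
  have hKB : ∀ (g : (Fin N → ℝ) → ℝ), AEStronglyMeasurable g (volume.restrict Ω) →
      (∀ᵐ x ∂(volume.restrict Ω), |g x| ≤ c) → ∀ u v : Lp ℝ 2 (volume.restrict Ω),
      |∫ x in Ω, g x * (u : (Fin N → ℝ) → ℝ) x * v x| ≤ c * ‖u‖ * ‖v‖ := by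
    intro g hg hgb u v
    have habs : ∫ x in Ω, |(u : (Fin N → ℝ) → ℝ) x * v x| ≤ ‖u‖ * ‖v‖ := by
      have h1 : ⟪|u|, |v|⟫ = ∫ x in Ω, |(u : (Fin N → ℝ) → ℝ) x| * |(v : (Fin N → ℝ) → ℝ) x| := by
        rw [MeasureTheory.L2.inner_def]
        refine integral_congr_ae ?_
        filter_upwards [Lp.coeFn_abs u, Lp.coeFn_abs v] with x hx hy
        simp [hx, hy, RCLike.inner_apply, mul_comm]
      have h2 : ⟪|u|, |v|⟫ ≤ ‖|u|‖ * ‖|v|‖ := real_inner_le_norm _ _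
      rw [h1, norm_abs_eq_norm, norm_abs_eq_norm] at h2
      calc ∫ x in Ω, |(u : (Fin N → ℝ) → ℝ) x * v x|
          = ∫ x in Ω, |(u : (Fin N → ℝ) → ℝ) x| * |(v : (Fin N → ℝ) → ℝ) x| := by
            simp [abs_mul]
        _ ≤ ‖u‖ * ‖v‖ := h2
    calc |∫ x in Ω, g x * (u : (Fin N → ℝ) → ℝ) x * v x|
        ≤ ∫ x in Ω, |g x * (u : (Fin N → ℝ) → ℝ) x * v x| := by
          simpa only [Real.norm_eq_abs] using
            norm_integral_le_integral_norm (μ := volume.restrict Ω)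
              (fun x => g x * (u : (Fin N → ℝ) → ℝ) x * v x)
      _ ≤ ∫ x in Ω, c * |(u : (Fin N → ℝ) → ℝ) x * v x| := by
          refine integral_mono_ae ((hIw g hg hgb u v).abs) (((hInt2 u v).abs).const_mul c) ?_
          filter_upwards [hgb] with x hx
          have : |g x * ((u : (Fin N → ℝ) → ℝ) x * v x)| = |g x| * |(u : (Fin N → ℝ) → ℝ) x * v x| :=
            abs_mul _ _
          rw [← mul_assoc] at this
          rw [this]
          exact mul_le_mul_of_nonneg_right hx (abs_nonneg _)
      _ = c * ∫ x in Ω, |(u : (Fin N → ℝ) → ℝ) x * v x| := integral_const_mul _ _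
      _ ≤ c * (‖u‖ * ‖v‖) := mul_le_mul_of_nonneg_left habs hc0.le
      _ = c * ‖u‖ * ‖v‖ := by ring
  -- pointwise (in `u, v`) convergence to zero
  have hPT : ∀ u v : Lp ℝ 2 (volume.restrict Ω),
      Tendsto (fun n => ∫ x in Ω, w n x * (u : (Fin N → ℝ) → ℝ) x * v x) atTop (𝓝 0) := by
    intro u v
    have hg : IntegrableOn (fun x => (u : (Fin N → ℝ) → ℝ) x * v x) Ω := hInt2 u v
    have h := (hweak _ hg).sub
      (tendsto_const_nhds (x := ∫ x in Ω, m x * ((u : (Fin N → ℝ) → ℝ) x * v x)))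
    rw [sub_self] at h
    refine h.congr fun n => ?_
    have int1 : Integrable (fun x => mseq n x * ((u : (Fin N → ℝ) → ℝ) x * v x))
        (volume.restrict Ω) :=
      (hInt2 u v).bdd_mul (hmseq n).aestronglyMeasurable
        (by simpa [Real.norm_eq_abs] using hMseq n)
    have int2 : Integrable (fun x => m x * ((u : (Fin N → ℝ) → ℝ) x * v x))
        (volume.restrict Ω) :=
      (hInt2 u v).bdd_mul hm.aestronglyMeasurable (by simpa [Real.norm_eq_abs] using hM)
    rw [← integral_sub int1 int2]
    refine integral_congr_ae (Eventually.of_forall fun x => ?_)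
    simp only [hwdef]
    ring
  -- the inner-product formula for the difference operator
  have hC : ∀ n (f φ : H), ⟪(Gseq n - G) f, φ⟫ =
      ∫ x in Ω, w n x * (ι f : (Fin N → ℝ) → ℝ) x * (ι φ : (Fin N → ℝ) → ℝ) x := by
    intro n f φ
    have int1 : Integrable
        (fun x => mseq n x * (ι f : (Fin N → ℝ) → ℝ) x * (ι φ : (Fin N → ℝ) → ℝ) x)
        (volume.restrict Ω) := by
      have h := (hInt2 (ι f) (ι φ)).bdd_mul (hmseq n).aestronglyMeasurable
        (by simpa [Real.norm_eq_abs] using hMseq n)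
      simpa [mul_assoc] using h
    have int2 : Integrable
        (fun x => m x * (ι f : (Fin N → ℝ) → ℝ) x * (ι φ : (Fin N → ℝ) → ℝ) x)
        (volume.restrict Ω) := by
      have h := (hInt2 (ι f) (ι φ)).bdd_mul hm.aestronglyMeasurable
        (by simpa [Real.norm_eq_abs] using hM)
      simpa [mul_assoc] using h
    rw [ContinuousLinearMap.sub_apply, inner_sub_left, hGseq, hG, ← integral_sub int1 int2]
    refine integral_congr_ae (Eventually.of_forall fun x => ?_)
    simp only [hwdef]
    ring
  -- a compact set containing the image of the closed unit ball
  obtain ⟨K₀, hK₀c, hK₀s⟩ :=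
    (hι.image_closedBall_subset_compact (f := (ι : H →ₗ[ℝ] Lp ℝ 2 (volume.restrict Ω))) 1 :
      ∃ K : Set (Lp ℝ 2 (volume.restrict Ω)), IsCompact K ∧ ι '' Metric.closedBall 0 1 ⊆ K)
  -- norm bound from uniform smallness on K₀ × K₀
  have hNB : ∀ n (ε : ℝ), 0 ≤ ε →
      (∀ u ∈ K₀, ∀ v ∈ K₀,
        |∫ x in Ω, w n x * (u : (Fin N → ℝ) → ℝ) x * (v : (Fin N → ℝ) → ℝ) x| ≤ ε) →
      ‖Gseq n - G‖ ≤ ε := by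
    intro n ε hε hsmall
    refine ContinuousLinearMap.opNorm_le_bound _ hε fun f => ?_
    rcases eq_or_ne f 0 with rfl | hf
    · simp
    have key : ∀ φ : H, |⟪(Gseq n - G) f, φ⟫| ≤ ε * ‖f‖ * ‖φ‖ := by
      intro φ
      rcases eq_or_ne φ 0 with rfl | hφ
      · simp
      have hf0 : ‖f‖ ≠ 0 := norm_ne_zero_iff.mpr hf
      have hφ0 : ‖φ‖ ≠ 0 := norm_ne_zero_iff.mpr hφ
      set f' : H := ‖f‖⁻¹ • f with hf'def
      set φ' : H := ‖φ‖⁻¹ • φ with hφ'def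
      have hf'K : ι f' ∈ K₀ := by
        refine hK₀s (mem_image_of_mem _ ?_)
        rw [Metric.mem_closedBall, dist_zero_right, hf'def, norm_smul]
        simp [abs_of_nonneg (inv_nonneg.mpr (norm_nonneg f)), inv_mul_cancel₀ hf0]
      have hφ'K : ι φ' ∈ K₀ := by
        refine hK₀s (mem_image_of_mem _ ?_)
        rw [Metric.mem_closedBall, dist_zero_right, hφ'def, norm_smul]
        simp [abs_of_nonneg (inv_nonneg.mpr (norm_nonneg φ)), inv_mul_cancel₀ hφ0]
      have h1 : |⟪(Gseq n - G) f', φ'⟫| ≤ ε := by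
        rw [hC]
        exact hsmall _ hf'K _ hφ'K
      have h2 : ⟪(Gseq n - G) f, φ⟫ = ‖f‖ * ‖φ‖ * ⟪(Gseq n - G) f', φ'⟫ := by
        have e1 : ‖f‖ • f' = f := smul_inv_smul₀ hf0 f
        have e2 : ‖φ‖ • φ' = φ := smul_inv_smul₀ hφ0 φ
        calc ⟪(Gseq n - G) f, φ⟫ = ⟪(Gseq n - G) (‖f‖ • f'), ‖φ‖ • φ'⟫ := by rw [e1, e2]
          _ = ‖f‖ * ‖φ‖ * ⟪(Gseq n - G) f', φ'⟫ := by
            rw [(Gseq n - G).map_smul, real_inner_smul_left, real_inner_smul_right]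
            ring
      calc |⟪(Gseq n - G) f, φ⟫| = ‖f‖ * ‖φ‖ * |⟪(Gseq n - G) f', φ'⟫| := by
            rw [h2, abs_mul, abs_mul, abs_of_nonneg (norm_nonneg f),
              abs_of_nonneg (norm_nonneg φ)]
        _ ≤ ‖f‖ * ‖φ‖ * ε := by
            exact mul_le_mul_of_nonneg_left h1 (by positivity)
        _ = ε * ‖f‖ * ‖φ‖ := by ring
    rcases eq_or_ne ((Gseq n - G) f) 0 with h0 | h0
    · rw [h0]
      simp only [norm_zero]
      positivity
    · have hk := key ((Gseq n - G) f)
      rw [real_inner_self_eq_norm_mul_norm,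
        abs_of_nonneg (mul_nonneg (norm_nonneg _) (norm_nonneg _))] at hk
      have hpos : 0 < ‖(Gseq n - G) f‖ := norm_pos_iff.mpr h0
      nlinarith
  -- main convergence argument
  rw [Metric.tendsto_atTop]
  intro ε hε
  obtain ⟨r, hr⟩ := hK₀c.isBounded.subset_closedBall 0
  set R : ℝ := max r 0 with hRdef
  have hR0 : (0 : ℝ) ≤ R := le_max_right _ _
  have hRK : ∀ u ∈ K₀, ‖u‖ ≤ R := by
    intro u hu
    have := hr hu
    rw [Metric.mem_closedBall, dist_zero_right] at this
    exact this.trans (le_max_left _ _)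
  set ε' : ℝ := ε / 2 with hε'def
  have hε'0 : 0 < ε' := by positivity
  set δ : ℝ := ε' / (2 * (2 * c * R + 1)) with hδdef
  have hden : (0 : ℝ) < 2 * (2 * c * R + 1) := by positivity
  have hδ0 : 0 < δ := by positivity
  obtain ⟨t, htK, htcov⟩ := hK₀c.elim_nhds_subcover (fun u => Metric.ball u δ)
    (fun u _ => Metric.ball_mem_nhds u hδ0)
  have hev : ∀ᶠ n in atTop, ∀ a ∈ t, ∀ b ∈ t,
      |∫ x in Ω, w n x * (a : (Fin N → ℝ) → ℝ) x * (b : (Fin N → ℝ) → ℝ) x| < ε' / 2 := by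
    rw [eventually_all_finset]
    intro a _
    rw [eventually_all_finset]
    intro b _
    have h := NormedAddCommGroup.tendsto_nhds_zero.mp (hPT a b) (ε' / 2) (by positivity)
    simpa [Real.norm_eq_abs] using h
  rw [eventually_atTop] at hev
  obtain ⟨n₀, hn₀⟩ := hev
  refine ⟨n₀, fun n hn => ?_⟩
  have hbound : ‖Gseq n - G‖ ≤ ε' := by
    refine hNB n ε' hε'0.le fun u hu v hv => ?_
    obtain ⟨a, ha, hua⟩ := mem_iUnion₂.mp (htcov hu)
    obtain ⟨b, hb, hvb⟩ := mem_iUnion₂.mp (htcov hv)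
    have haK : a ∈ K₀ := htK a ha
    have hbK : b ∈ K₀ := htK b hb
    -- splitting identity
    have c1 : (fun x => w n x * ((u - a : Lp ℝ 2 (volume.restrict Ω)) : (Fin N → ℝ) → ℝ) x *
        (v : (Fin N → ℝ) → ℝ) x) =ᵐ[volume.restrict Ω]
        (fun x => w n x * (u : (Fin N → ℝ) → ℝ) x * (v : (Fin N → ℝ) → ℝ) x -
          w n x * (a : (Fin N → ℝ) → ℝ) x * (v : (Fin N → ℝ) → ℝ) x) := by
      filter_upwards [Lp.coeFn_sub u a] with x hx
      rw [hx]
      simp only [Pi.sub_apply]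
      ring
    have c2 : (fun x => w n x * (a : (Fin N → ℝ) → ℝ) x *
        ((v - b : Lp ℝ 2 (volume.restrict Ω)) : (Fin N → ℝ) → ℝ) x) =ᵐ[volume.restrict Ω]
        (fun x => w n x * (a : (Fin N → ℝ) → ℝ) x * (v : (Fin N → ℝ) → ℝ) x -
          w n x * (a : (Fin N → ℝ) → ℝ) x * (b : (Fin N → ℝ) → ℝ) x) := by
      filter_upwards [Lp.coeFn_sub v b] with x hx
      rw [hx]
      simp only [Pi.sub_apply]
      ring
    have h1 : ∫ x in Ω, w n x * ((u - a : Lp ℝ 2 (volume.restrict Ω)) : (Fin N → ℝ) → ℝ) x *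
        (v : (Fin N → ℝ) → ℝ) x =
        (∫ x in Ω, w n x * (u : (Fin N → ℝ) → ℝ) x * (v : (Fin N → ℝ) → ℝ) x) -
        ∫ x in Ω, w n x * (a : (Fin N → ℝ) → ℝ) x * (v : (Fin N → ℝ) → ℝ) x := by
      rw [integral_congr_ae c1, integral_sub (hIw _ (hwm n) (hwb n) u v) (hIw _ (hwm n) (hwb n) a v)]
    have h2 : ∫ x in Ω, w n x * (a : (Fin N → ℝ) → ℝ) x *
        ((v - b : Lp ℝ 2 (volume.restrict Ω)) : (Fin N → ℝ) → ℝ) x =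
        (∫ x in Ω, w n x * (a : (Fin N → ℝ) → ℝ) x * (v : (Fin N → ℝ) → ℝ) x) -
        ∫ x in Ω, w n x * (a : (Fin N → ℝ) → ℝ) x * (b : (Fin N → ℝ) → ℝ) x := by
      rw [integral_congr_ae c2, integral_sub (hIw _ (hwm n) (hwb n) a v) (hIw _ (hwm n) (hwb n) a b)]
    have e : (∫ x in Ω, w n x * (u : (Fin N → ℝ) → ℝ) x * (v : (Fin N → ℝ) → ℝ) x) =
        (∫ x in Ω, w n x * (a : (Fin N → ℝ) → ℝ) x * (b : (Fin N → ℝ) → ℝ) x) +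
        (∫ x in Ω, w n x * ((u - a : Lp ℝ 2 (volume.restrict Ω)) : (Fin N → ℝ) → ℝ) x *
          (v : (Fin N → ℝ) → ℝ) x) +
        (∫ x in Ω, w n x * (a : (Fin N → ℝ) → ℝ) x *
          ((v - b : Lp ℝ 2 (volume.restrict Ω)) : (Fin N → ℝ) → ℝ) x) := by
      rw [h1, h2]; ring
    have hdua : ‖u - a‖ ≤ δ := by
      have := Metric.mem_ball.mp hua
      rw [dist_eq_norm] at this
      exact this.le
    have hdvb : ‖v - b‖ ≤ δ := by
      have := Metric.mem_ball.mp hvb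
      rw [dist_eq_norm] at this
      exact this.le
    calc |∫ x in Ω, w n x * (u : (Fin N → ℝ) → ℝ) x * (v : (Fin N → ℝ) → ℝ) x|
        ≤ |∫ x in Ω, w n x * (a : (Fin N → ℝ) → ℝ) x * (b : (Fin N → ℝ) → ℝ) x| +
          |∫ x in Ω, w n x * ((u - a : Lp ℝ 2 (volume.restrict Ω)) : (Fin N → ℝ) → ℝ) x *
            (v : (Fin N → ℝ) → ℝ) x| +
          |∫ x in Ω, w n x * (a : (Fin N → ℝ) → ℝ) x *
            ((v - b : Lp ℝ 2 (volume.restrict Ω)) : (Fin N → ℝ) → ℝ) x| := by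
          rw [e]; exact abs_add_three _ _ _
      _ ≤ ε' / 2 + c * ‖u - a‖ * ‖v‖ + c * ‖a‖ * ‖v - b‖ := by
          refine add_le_add (add_le_add (hn₀ n hn a ha b hb).le ?_) ?_
          · exact hKB _ (hwm n) (hwb n) (u - a) v
          · exact hKB _ (hwm n) (hwb n) a (v - b)
      _ ≤ ε' / 2 + c * δ * R + c * R * δ := by
          have b1 : c * ‖u - a‖ * ‖v‖ ≤ c * δ * R := by
            have := hRK v hv
            have h := mul_le_mul (mul_le_mul_of_nonneg_left hdua hc0.le) this (norm_nonneg v)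
              (by positivity)
            linarith
          have b2 : c * ‖a‖ * ‖v - b‖ ≤ c * R * δ := by
            have := hRK a haK
            have h := mul_le_mul (mul_le_mul_of_nonneg_left this hc0.le) hdvb (norm_nonneg _)
              (by positivity)
            linarith
          exact add_le_add (add_le_add le_rfl b1) b2
      _ ≤ ε' := by
          have hδe : δ * (2 * (2 * c * R + 1)) = ε' := by
            rw [hδdef]; field_simp
          nlinarith [mul_nonneg (mul_nonneg hc0.le hR0) hδ0.le]
  rw [Real.dist_eq, sub_zero, abs_of_nonneg (norm_nonneg _)]
  have : ε' < ε := by rw [hε'def]; linarith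
  exact lt_of_le_of_lt hbound this
end
end
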